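/- arXiv:1605.07018 — 2 statements merged into one kernel-verified Lean document; each statement's English description precedes it below -/
import Mathlib

section
/- Fix integers K ≥ 2 and T ≥ K², set ε = (1/8)√(K/T), and let G_1,…,G_T be the random directed graphs on V = {1,…,K} generated as follows: an action v* is drawn uniformly at random from V; independently across rounds t, the loss ℓ_t(v*) is Bernoulli(1/2 − ε); every graph G_t contains all self-loops; each edge u → v with v ≠ v* (u ≠ v) is present independently with probability 1 − 2ε; and each edge u → v* (u ≠ v*) is present with probability 1 when ℓ_t(v*) = 1 and with probability (1 − 2ε)/(1 + 2ε) when ℓ_t(v*) = 0, these edges being conditionally independent of each other given ℓ_t(v*). Then with probability at least 1 − ε/8, every one of the graphs G_1,…,G_T has independence number at most 9. -/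
open scoped BigOperators

/-- The independence number of the directed graph `G` is at most `n`: every set `S`
of vertices with no edge `u → v` between two distinct members (self-loops disregarded)
has size at most `n`. -/
def IndepNumLE {K : ℕ} (G : Fin K → Fin K → Bool) (n : ℕ) : Prop :=
  ∀ S : Finset (Fin K), (∀ u ∈ S, ∀ v ∈ S, u ≠ v → G u v = false) → S.card ≤ n

/-- The probability mass function of the random graph construction: an outcome consists
of the special action `v⋆`, the Boolean losses `L t` of action `v⋆` at all rounds, and
the feedback graphs `G t`.  `v⋆` is uniform on `Fin K`; independently across rounds, the
loss of `v⋆` is Bernoulli(1/2 - ε); all self-loops are present; each edge `u → v` with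
`v ≠ v⋆` is present independently with probability `1 - 2ε`; each edge `u → v⋆` is
present with probability `1` if `L t = 1` and with probability `(1-2ε)/(1+2ε)` if
`L t = 0`, conditionally independently given `L t`. -/
noncomputable def graphDensity (K T : ℕ) (ε : ℝ)
    (ω : Fin K × (Fin T → Bool) × (Fin T → Fin K → Fin K → Bool)) : ℝ :=
  (1 / K) *
    ∏ t : Fin T,
      ((if ω.2.1 t then 1 / 2 - ε else 1 / 2 + ε) *
        ∏ p : Fin K × Fin K,
          if p.1 = p.2 then (if ω.2.2 t p.1 p.2 then 1 else 0)
          else if p.2 = ω.1 then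
            (if ω.2.1 t then (if ω.2.2 t p.1 p.2 then 1 else 0)
             else (if ω.2.2 t p.1 p.2 then (1 - 2 * ε) / (1 + 2 * ε)
                   else (4 * ε) / (1 + 2 * ε)))
          else (if ω.2.2 t p.1 p.2 then 1 - 2 * ε else 2 * ε))

namespace Stmt2Aux

noncomputable def edgeW {K : ℕ} (ε : ℝ) (v : Fin K) (b : Bool) (p : Fin K × Fin K)
    (x : Bool) : ℝ :=
  if p.1 = p.2 then (if x then 1 else 0)
  else if p.2 = v then
    (if b then (if x then 1 else 0)
     else (if x then (1 - 2 * ε) / (1 + 2 * ε) else (4 * ε) / (1 + 2 * ε)))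
  else (if x then 1 - 2 * ε else 2 * ε)

noncomputable def coinW (ε : ℝ) (b : Bool) : ℝ := if b then 1 / 2 - ε else 1 / 2 + ε

noncomputable def roundW {K : ℕ} (ε : ℝ) (v : Fin K) (b : Bool)
    (g : Fin K → Fin K → Bool) : ℝ :=
  coinW ε b * ∏ p : Fin K × Fin K, edgeW ε v b p (g p.1 p.2)

theorem graphDensity_eq (K T : ℕ) (ε : ℝ)
    (ω : Fin K × (Fin T → Bool) × (Fin T → Fin K → Fin K → Bool)) :
    graphDensity K T ε ω = (1 / (K : ℝ)) * ∏ t : Fin T, roundW ε ω.1 (ω.2.1 t) (ω.2.2 t) := rfl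

variable {K : ℕ} {ε : ℝ}

theorem edgeW_nonneg (h0 : 0 ≤ ε) (h1 : ε ≤ 1/8) (v : Fin K) (b : Bool)
    (p : Fin K × Fin K) (x : Bool) : 0 ≤ edgeW ε v b p x := by
  have hpos : (0:ℝ) < 1 + 2*ε := by linarith
  cases b <;> cases x <;>
    by_cases h : p.1 = p.2 <;> by_cases h2 : p.2 = v <;>
      simp [edgeW, h, h2] <;> (try intros) <;> (try split_ifs) <;>
      first
        | trivial
        | linarith
        | (apply div_nonneg <;> linarith)

theorem edgeW_sum (h0 : 0 ≤ ε) (v : Fin K) (b : Bool) (p : Fin K × Fin K) :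
    ∑ x : Bool, edgeW ε v b p x = 1 := by
  have hpos : (0:ℝ) < 1 + 2*ε := by linarith
  have hne : (1 + 2*ε) ≠ 0 := ne_of_gt hpos
  cases b <;>
    by_cases h : p.1 = p.2 <;> by_cases h2 : p.2 = v <;>
      simp [edgeW, h, h2, Fintype.sum_bool] <;> (try intros) <;> (try split_ifs) <;>
      first
        | trivial
        | linarith
        | (field_simp; ring)

theorem edgeW_false_le (h0 : 0 ≤ ε) (v : Fin K) (b : Bool) {p : Fin K × Fin K}
    (hp : p.1 ≠ p.2) : edgeW ε v b p false ≤ 4 * ε := by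
  have hpos : (0:ℝ) < 1 + 2*ε := by linarith
  cases b <;> by_cases h2 : p.2 = v <;>
    simp [edgeW, hp, h2] <;> (try intros) <;> (try split_ifs) <;>
    first
      | trivial
      | linarith
      | (exact div_le_self (by linarith) (by linarith))

theorem coinW_nonneg (h0 : 0 ≤ ε) (h1 : ε ≤ 1/8) (b : Bool) : 0 ≤ coinW ε b := by
  unfold coinW; split_ifs <;> linarith

theorem coinW_sum : ∑ b : Bool, coinW ε b = 1 := by
  simp only [Fintype.sum_bool, coinW]; norm_num

theorem graph_sum (v : Fin K) (b : Bool) (S : Finset (Fin K)) :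
    ∑ g ∈ Finset.univ.filter
        (fun g : Fin K → Fin K → Bool => ∀ u ∈ S, ∀ w ∈ S, u ≠ w → g u w = false),
      ∏ p : Fin K × Fin K, edgeW ε v b p (g p.1 p.2)
    = ∏ p : Fin K × Fin K,
        ∑ x ∈ (if p ∈ S.offDiag then ({false} : Finset Bool) else Finset.univ),
          edgeW ε v b p x := by
  classical
  rw [Finset.prod_univ_sum]
  refine Finset.sum_nbij' (fun g p => g p.1 p.2) (fun h u w => h (u, w)) ?_ ?_ ?_ ?_ ?_
  · intro g hg
    rw [Finset.mem_filter] at hg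
    rw [Fintype.mem_piFinset]
    intro p
    by_cases hp : p ∈ S.offDiag
    · rw [if_pos hp]
      rw [Finset.mem_offDiag] at hp
      rw [Finset.mem_singleton]
      exact hg.2 p.1 hp.1 p.2 hp.2.1 hp.2.2
    · rw [if_neg hp]; exact Finset.mem_univ _
  · intro h hh
    rw [Fintype.mem_piFinset] at hh
    rw [Finset.mem_filter]
    refine ⟨Finset.mem_univ _, fun u hu w hw huw => ?_⟩
    have := hh (u, w)
    rw [if_pos (Finset.mem_offDiag.mpr ⟨hu, hw, huw⟩), Finset.mem_singleton] at this
    exact this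
  · intro g _; rfl
  · intro h _; rfl
  · intro g _; rfl

theorem graph_total (h0 : 0 ≤ ε) (v : Fin K) (b : Bool) :
    ∑ g : Fin K → Fin K → Bool, ∏ p : Fin K × Fin K, edgeW ε v b p (g p.1 p.2) = 1 := by
  classical
  have huniv : (Finset.univ : Finset (Fin K → Fin K → Bool))
      = Finset.univ.filter
        (fun g : Fin K → Fin K → Bool =>
          ∀ u ∈ (∅ : Finset (Fin K)), ∀ w ∈ (∅ : Finset (Fin K)), u ≠ w → g u w = false) := by
    ext g; simp
  rw [huniv, graph_sum]
  rw [Finset.prod_eq_one]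
  intro p _
  rw [if_neg (by simp)]
  exact edgeW_sum h0 v b p

theorem graph_bad (h0 : 0 ≤ ε) (h1 : ε ≤ 1/8) (v : Fin K) (b : Bool)
    (S : Finset (Fin K)) (hS : S.card = 10) :
    ∑ g ∈ Finset.univ.filter
        (fun g : Fin K → Fin K → Bool => ∀ u ∈ S, ∀ w ∈ S, u ≠ w → g u w = false),
      ∏ p : Fin K × Fin K, edgeW ε v b p (g p.1 p.2) ≤ (4 * ε) ^ 90 := by
  classical
  rw [graph_sum]
  have hrw : ∀ p : Fin K × Fin K,
      (∑ x ∈ (if p ∈ S.offDiag then ({false} : Finset Bool) else Finset.univ), edgeW ε v b p x)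
      = if p ∈ S.offDiag then edgeW ε v b p false else 1 := by
    intro p
    by_cases hp : p ∈ S.offDiag
    · rw [if_pos hp, if_pos hp, Finset.sum_singleton]
    · rw [if_neg hp, if_neg hp]; exact edgeW_sum h0 v b p
  rw [Finset.prod_congr rfl (fun p _ => hrw p), Finset.prod_ite_mem, Finset.univ_inter]
  have hcard : S.offDiag.card = 90 := by
    rw [Finset.offDiag_card, hS]
  calc ∏ p ∈ S.offDiag, edgeW ε v b p false
      ≤ ∏ _p ∈ S.offDiag, (4 * ε) :=
        Finset.prod_le_prod (fun p _ => edgeW_nonneg h0 h1 v b p false)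
          (fun p hp => edgeW_false_le h0 v b (Finset.mem_offDiag.mp hp).2.2)
    _ = (4 * ε) ^ 90 := by rw [Finset.prod_const, hcard]

theorem roundW_nonneg (h0 : 0 ≤ ε) (h1 : ε ≤ 1/8) (v : Fin K) (b : Bool)
    (g : Fin K → Fin K → Bool) : 0 ≤ roundW ε v b g :=
  mul_nonneg (coinW_nonneg h0 h1 b)
    (Finset.prod_nonneg fun p _ => edgeW_nonneg h0 h1 v b p _)

theorem round_total (h0 : 0 ≤ ε) (v : Fin K) :
    ∑ x : Bool × (Fin K → Fin K → Bool), roundW ε v x.1 x.2 = 1 := by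
  classical
  rw [Fintype.sum_prod_type]
  have h : ∀ b : Bool, ∑ g : Fin K → Fin K → Bool, roundW ε v b g = coinW ε b := by
    intro b
    unfold roundW
    rw [← Finset.mul_sum, graph_total h0 v b, mul_one]
  rw [Finset.sum_congr rfl (fun b _ => h b)]
  exact coinW_sum

theorem round_bad (h0 : 0 ≤ ε) (h1 : ε ≤ 1/8) (v : Fin K)
    (S : Finset (Fin K)) (hS : S.card = 10) :
    ∑ x ∈ Finset.univ.filter
        (fun x : Bool × (Fin K → Fin K → Bool) =>
          ∀ u ∈ S, ∀ w ∈ S, u ≠ w → x.2 u w = false),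
      roundW ε v x.1 x.2 ≤ (4 * ε) ^ 90 := by
  classical
  have hset : Finset.univ.filter
        (fun x : Bool × (Fin K → Fin K → Bool) =>
          ∀ u ∈ S, ∀ w ∈ S, u ≠ w → x.2 u w = false)
      = (Finset.univ : Finset Bool) ×ˢ
          (Finset.univ.filter
            (fun g : Fin K → Fin K → Bool => ∀ u ∈ S, ∀ w ∈ S, u ≠ w → g u w = false)) := by
    ext x; simp [Finset.mem_product]
  rw [hset, Finset.sum_product]
  have hb : ∀ b : Bool,
      (∑ g ∈ Finset.univ.filter
          (fun g : Fin K → Fin K → Bool => ∀ u ∈ S, ∀ w ∈ S, u ≠ w → g u w = false),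
        roundW ε v b g) ≤ coinW ε b * (4 * ε) ^ 90 := by
    intro b
    unfold roundW
    rw [← Finset.mul_sum]
    exact mul_le_mul_of_nonneg_left (graph_bad h0 h1 v b S hS) (coinW_nonneg h0 h1 b)
  calc (∑ b : Bool, ∑ g ∈ Finset.univ.filter
          (fun g : Fin K → Fin K → Bool => ∀ u ∈ S, ∀ w ∈ S, u ≠ w → g u w = false),
        roundW ε v b g)
      ≤ ∑ b : Bool, coinW ε b * (4 * ε) ^ 90 := Finset.sum_le_sum (fun b _ => hb b)
    _ = (4 * ε) ^ 90 := by rw [← Finset.sum_mul, coinW_sum, one_mul]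

theorem density_nonneg (K T : ℕ) {ε : ℝ} (h0 : 0 ≤ ε) (h1 : ε ≤ 1/8)
    (ω : Fin K × (Fin T → Bool) × (Fin T → Fin K → Fin K → Bool)) :
    0 ≤ graphDensity K T ε ω := by
  rw [graphDensity_eq]
  exact mul_nonneg (by positivity)
    (Finset.prod_nonneg fun t _ => roundW_nonneg h0 h1 _ _ _)

theorem cyl (K T : ℕ) (hK : 0 < K) {ε : ℝ} (h0 : 0 ≤ ε) (h1 : ε ≤ 1/8)
    (t0 : Fin T) (S : Finset (Fin K)) (hS : S.card = 10) :
    ∑ ω ∈ Finset.univ.filter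
        (fun ω : Fin K × (Fin T → Bool) × (Fin T → Fin K → Fin K → Bool) =>
          ∀ u ∈ S, ∀ w ∈ S, u ≠ w → ω.2.2 t0 u w = false),
      graphDensity K T ε ω ≤ (4 * ε) ^ 90 := by
  classical
  have hset : Finset.univ.filter
        (fun ω : Fin K × (Fin T → Bool) × (Fin T → Fin K → Fin K → Bool) =>
          ∀ u ∈ S, ∀ w ∈ S, u ≠ w → ω.2.2 t0 u w = false)
      = (Finset.univ : Finset (Fin K)) ×ˢ
          (Finset.univ.filter
            (fun y : (Fin T → Bool) × (Fin T → Fin K → Fin K → Bool) =>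
              ∀ u ∈ S, ∀ w ∈ S, u ≠ w → y.2 t0 u w = false)) := by
    ext ω; simp [Finset.mem_product]
  rw [hset, Finset.sum_product]
  set pairC := Finset.univ.filter
      (fun x : Bool × (Fin K → Fin K → Bool) =>
        ∀ u ∈ S, ∀ w ∈ S, u ≠ w → x.2 u w = false) with hpairC
  have key : ∀ v : Fin K,
      (∑ y ∈ Finset.univ.filter
          (fun y : (Fin T → Bool) × (Fin T → Fin K → Fin K → Bool) =>
            ∀ u ∈ S, ∀ w ∈ S, u ≠ w → y.2 t0 u w = false),
        ∏ t : Fin T, roundW ε v (y.1 t) (y.2 t)) ≤ (4 * ε) ^ 90 := by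
    intro v
    have hrw : (∑ y ∈ Finset.univ.filter
          (fun y : (Fin T → Bool) × (Fin T → Fin K → Fin K → Bool) =>
            ∀ u ∈ S, ∀ w ∈ S, u ≠ w → y.2 t0 u w = false),
        ∏ t : Fin T, roundW ε v (y.1 t) (y.2 t))
        = ∑ h ∈ Fintype.piFinset (fun t : Fin T => if t = t0 then pairC else Finset.univ),
            ∏ t : Fin T, roundW ε v (h t).1 (h t).2 := by
      refine Finset.sum_nbij' (fun y t => (y.1 t, y.2 t))
        (fun h => (fun t => (h t).1, fun t => (h t).2)) ?_ ?_ ?_ ?_ ?_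
      · intro y hy
        rw [Finset.mem_filter] at hy
        rw [Fintype.mem_piFinset]
        intro t
        by_cases ht : t = t0
        · subst ht
          rw [if_pos rfl, hpairC, Finset.mem_filter]
          exact ⟨Finset.mem_univ _, hy.2⟩
        · rw [if_neg ht]; exact Finset.mem_univ _
      · intro h hh
        rw [Fintype.mem_piFinset] at hh
        rw [Finset.mem_filter]
        refine ⟨Finset.mem_univ _, ?_⟩
        have := hh t0
        rw [if_pos rfl, hpairC, Finset.mem_filter] at this
        exact this.2
      · intro y _; rfl
      · intro h _; rfl
      · intro y _; rfl
    have hps := Finset.prod_univ_sum (fun t : Fin T => if t = t0 then pairC else Finset.univ)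
      (fun _t (x : Bool × (Fin K → Fin K → Bool)) => roundW ε v x.1 x.2)
    rw [hrw, ← hps]
    rw [← Finset.mul_prod_erase Finset.univ
        (fun t => ∑ x ∈ (if t = t0 then pairC else Finset.univ), roundW ε v x.1 x.2)
        (Finset.mem_univ t0)]
    have herase : (∏ t ∈ Finset.univ.erase t0,
        ∑ x ∈ (if t = t0 then pairC else Finset.univ), roundW ε v x.1 x.2) = 1 := by
      apply Finset.prod_eq_one
      intro t ht
      rw [if_neg (Finset.ne_of_mem_erase ht)]
      exact round_total h0 v
    rw [herase, mul_one, if_pos rfl, hpairC]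
    exact round_bad h0 h1 v S hS
  have hgd : ∀ (v : Fin K) (y : (Fin T → Bool) × (Fin T → Fin K → Fin K → Bool)),
      graphDensity K T ε (v, y)
      = (1 / (K : ℝ)) * ∏ t : Fin T, roundW ε v (y.1 t) (y.2 t) := fun v y => rfl
  have hKne : ((K : ℝ)) ≠ 0 := Nat.cast_ne_zero.mpr hK.ne'
  calc (∑ v : Fin K, ∑ y ∈ Finset.univ.filter
          (fun y : (Fin T → Bool) × (Fin T → Fin K → Fin K → Bool) =>
            ∀ u ∈ S, ∀ w ∈ S, u ≠ w → y.2 t0 u w = false),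
        graphDensity K T ε (v, y))
      ≤ ∑ _v : Fin K, (1 / (K : ℝ)) * (4 * ε) ^ 90 := by
        apply Finset.sum_le_sum
        intro v _
        rw [Finset.sum_congr rfl (fun y _ => hgd v y), ← Finset.mul_sum]
        exact mul_le_mul_of_nonneg_left (key v) (by positivity)
    _ = (4 * ε) ^ 90 := by
        rw [Finset.sum_const, Finset.card_univ, Fintype.card_fin, nsmul_eq_mul]
        field_simp

theorem sum_biUnion_le_real {α ι : Type*} [DecidableEq α] (I : Finset ι)
    (C : ι → Finset α) (f : α → ℝ) (hf : ∀ a, 0 ≤ f a) :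
    ∑ a ∈ I.biUnion C, f a ≤ ∑ i ∈ I, ∑ a ∈ C i, f a := by
  classical
  induction I using Finset.induction_on with
  | empty => simp
  | @insert i I hi ih =>
      rw [Finset.biUnion_insert, Finset.sum_insert hi]
      have h2 := Finset.sum_union_inter (s₁ := C i) (s₂ := I.biUnion C) (f := f)
      have h3 : 0 ≤ ∑ a ∈ (C i ∩ I.biUnion C), f a := Finset.sum_nonneg fun a _ => hf a
      linarith

theorem sum_le_sum_of_cover {α ι : Type*} [DecidableEq α] (I : Finset ι)
    (C : ι → Finset α) (B : Finset α) (f : α → ℝ) (hf : ∀ a, 0 ≤ f a)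
    (h : ∀ a ∈ B, ∃ i ∈ I, a ∈ C i) :
    ∑ a ∈ B, f a ≤ ∑ i ∈ I, ∑ a ∈ C i, f a := by
  classical
  refine le_trans (Finset.sum_le_sum_of_subset_of_nonneg
    (fun a ha => Finset.mem_biUnion.mpr (h a ha)) (fun a _ _ => hf a)) ?_
  exact sum_biUnion_le_real I C f hf

theorem arith (K T : ℕ) (hK : 2 ≤ K) (hT : K ^ 2 ≤ T) {ε : ℝ}
    (hε : ε = Real.sqrt ((K : ℝ) / T) / 8) :
    ((T : ℝ) * (K : ℝ) ^ 10) * (4 * ε) ^ 90 ≤ ε / 8 := by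
  have hK2 : (2 : ℝ) ≤ (K : ℝ) := by exact_mod_cast hK
  have hKpos : (0 : ℝ) < K := by linarith
  have hTR : ((K : ℝ)) ^ 2 ≤ (T : ℝ) := by exact_mod_cast hT
  have hTpos : (0 : ℝ) < T := by nlinarith
  have hxnn : (0 : ℝ) ≤ (K : ℝ) / T := by positivity
  have hsq : Real.sqrt ((K : ℝ) / T) ^ 2 = (K : ℝ) / T := Real.sq_sqrt hxnn
  have h4e : (4 * ε) ^ 2 = (K : ℝ) / (4 * T) := by
    have h : 4 * ε = Real.sqrt ((K : ℝ) / T) / 2 := by rw [hε]; ring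
    rw [h, div_pow, hsq]
    ring
  have h90 : (4 * ε) ^ 90 = ((K : ℝ) / (4 * T)) ^ 45 := by
    rw [← h4e, ← pow_mul]
  have hKT1 : (K : ℝ) / T ≤ 1 := by
    rw [div_le_one hTpos]; nlinarith
  have hsqrt_ge : (K : ℝ) / T ≤ Real.sqrt ((K : ℝ) / T) := by
    nlinarith [Real.sqrt_nonneg ((K : ℝ) / T), hsq, hKT1]
  have e1 : ((K : ℝ) ^ 2) ^ 43 ≤ (T : ℝ) ^ 43 := pow_le_pow_left₀ (by positivity) hTR 43
  have e0 : (64 : ℝ) ≤ (K : ℝ) ^ 32 := by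
    calc (64 : ℝ) ≤ 2 ^ 32 := by norm_num
      _ ≤ (K : ℝ) ^ 32 := pow_le_pow_left₀ (by norm_num) hK2 32
  have e2 : 64 * (K : ℝ) ^ 54 ≤ 4 ^ 45 * (T : ℝ) ^ 43 := by
    calc 64 * (K : ℝ) ^ 54 ≤ (K : ℝ) ^ 32 * (K : ℝ) ^ 54 :=
          mul_le_mul_of_nonneg_right e0 (by positivity)
      _ = ((K : ℝ) ^ 2) ^ 43 := by ring
      _ ≤ (T : ℝ) ^ 43 := e1
      _ ≤ 4 ^ 45 * (T : ℝ) ^ 43 := by nlinarith [pow_nonneg hTpos.le 43]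
  calc ((T : ℝ) * (K : ℝ) ^ 10) * (4 * ε) ^ 90
      = (K : ℝ) ^ 55 / (4 ^ 45 * (T : ℝ) ^ 44) := by
        rw [h90, div_pow]
        field_simp
    _ ≤ (K : ℝ) / (64 * T) := by
        rw [div_le_div_iff₀ (by positivity) (by positivity)]
        calc (K : ℝ) ^ 55 * (64 * T) = (64 * (K : ℝ) ^ 54) * ((K : ℝ) * T) := by ring
          _ ≤ (4 ^ 45 * (T : ℝ) ^ 43) * ((K : ℝ) * T) :=
              mul_le_mul_of_nonneg_right e2 (by positivity)
          _ = (K : ℝ) * (4 ^ 45 * (T : ℝ) ^ 44) := by ring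
    _ ≤ ε / 8 := by
        rw [hε]
        have h : (K : ℝ) / (64 * T) = ((K : ℝ) / T) / 64 := by
          ring
        rw [h]
        linarith
end Stmt2Aux

open Stmt2Aux

/-- For `K ≥ 2`, `T ≥ K²` and `ε = (1/8)√(K/T)`, with probability at
least `1 - ε/8` every one of the random graphs `G₁,…,G_T` generated as above has
independence number at most `9`. -/
theorem stmt2 (K T : ℕ) (hK : 2 ≤ K) (hT : K ^ 2 ≤ T)
    (ε : ℝ) (hε : ε = Real.sqrt ((K : ℝ) / T) / 8)
    (μ : PMF (Fin K × (Fin T → Bool) × (Fin T → Fin K → Fin K → Bool)))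
    (hμ : ∀ ω, μ ω = ENNReal.ofReal (graphDensity K T ε ω)) :
    μ.toOuterMeasure {ω | ∀ t, IndepNumLE (ω.2.2 t) 9} ≥ ENNReal.ofReal (1 - ε / 8) := by
  classical
  have hK0 : 0 < K := by omega
  have hK4 : 4 ≤ T := by
    have : 2 ^ 2 ≤ K ^ 2 := Nat.pow_le_pow_left hK 2
    omega
  have hKR : (2 : ℝ) ≤ (K : ℝ) := by exact_mod_cast hK
  have hTR : ((K : ℝ)) ^ 2 ≤ (T : ℝ) := by exact_mod_cast hT
  have hTpos : (0 : ℝ) < T := by nlinarith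
  have h0 : 0 ≤ ε := by rw [hε]; positivity
  have h1 : ε ≤ 1 / 8 := by
    rw [hε]
    have hle : Real.sqrt ((K : ℝ) / T) ≤ 1 :=
      Real.sqrt_le_one.mpr (by rw [div_le_one hTpos]; nlinarith)
    linarith
  have hnn : ∀ ω : Fin K × (Fin T → Bool) × (Fin T → Fin K → Fin K → Bool), 0 ≤ graphDensity K T ε ω := density_nonneg K T h0 h1
  -- total mass is one
  have htot : ∑ ω : Fin K × (Fin T → Bool) × (Fin T → Fin K → Fin K → Bool), graphDensity K T ε ω = 1 := by
    have h := μ.tsum_coe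
    rw [tsum_fintype] at h
    simp only [hμ] at h
    rw [← ENNReal.ofReal_sum_of_nonneg (fun i _ => hnn i)] at h
    exact ENNReal.ofReal_eq_one.mp h
  -- measure of the good event as a real sum
  have hmeas : μ.toOuterMeasure {ω : Fin K × (Fin T → Bool) × (Fin T → Fin K → Fin K → Bool) | ∀ t, IndepNumLE (ω.2.2 t) 9}
      = ENNReal.ofReal (∑ ω ∈ Finset.univ.filter
          (fun ω : Fin K × (Fin T → Bool) × (Fin T → Fin K → Fin K → Bool) => ∀ t, IndepNumLE (ω.2.2 t) 9), graphDensity K T ε ω) := by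
    rw [PMF.toOuterMeasure_apply, tsum_fintype]
    rw [ENNReal.ofReal_sum_of_nonneg (fun i _ => hnn i)]
    rw [Finset.sum_filter]
    apply Finset.sum_congr rfl
    intro ω _
    rw [Set.indicator_apply]
    simp only [Set.mem_setOf_eq]
    split_ifs with h
    · exact hμ ω
    · rfl
  rw [hmeas]
  apply ENNReal.ofReal_le_ofReal
  -- bound the bad event
  set I : Finset (Fin T × Finset (Fin K)) :=
    (Finset.univ : Finset (Fin T)) ×ˢ
      (Finset.univ.filter fun S : Finset (Fin K) => S.card = 10) with hI
  set C : Fin T × Finset (Fin K) → Finset (Fin K × (Fin T → Bool) × (Fin T → Fin K → Fin K → Bool)) := fun q =>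
    Finset.univ.filter
      (fun ω : Fin K × (Fin T → Bool) × (Fin T → Fin K → Fin K → Bool) => ∀ u ∈ q.2, ∀ w ∈ q.2, u ≠ w → ω.2.2 q.1 u w = false) with hC
  have hcover : ∀ ω ∈ Finset.univ.filter
      (fun ω : Fin K × (Fin T → Bool) × (Fin T → Fin K → Fin K → Bool) => ¬ ∀ t, IndepNumLE (ω.2.2 t) 9), ∃ q ∈ I, ω ∈ C q := by
    intro ω hω
    rw [Finset.mem_filter] at hω
    have hna := hω.2
    push_neg at hna
    obtain ⟨t, ht⟩ := hna
    rw [IndepNumLE] at ht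
    push_neg at ht
    obtain ⟨S, hSind, hcard⟩ := ht
    obtain ⟨S', hsub, hS'⟩ := Finset.exists_subset_card_eq (show 10 ≤ S.card by omega)
    refine ⟨(t, S'), ?_, ?_⟩
    · rw [hI, Finset.mem_product]
      exact ⟨Finset.mem_univ _, Finset.mem_filter.mpr ⟨Finset.mem_univ _, hS'⟩⟩
    · rw [hC, Finset.mem_filter]
      exact ⟨Finset.mem_univ _, fun u hu w hw huw => hSind u (hsub hu) w (hsub hw) huw⟩
  have hcylq : ∀ q ∈ I, ∑ ω ∈ C q, graphDensity K T ε ω ≤ (4 * ε) ^ 90 := by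
    intro q hq
    rw [hI, Finset.mem_product] at hq
    exact cyl K T hK0 h0 h1 q.1 q.2 (Finset.mem_filter.mp hq.2).2
  have hIcard : (I.card : ℝ) ≤ (T : ℝ) * (K : ℝ) ^ 10 := by
    have hfil : (Finset.univ.filter fun S : Finset (Fin K) => S.card = 10)
        = Finset.powersetCard 10 (Finset.univ : Finset (Fin K)) := by
      ext S; simp [Finset.mem_powersetCard]
    have : I.card = T * Nat.choose K 10 := by
      rw [hI, Finset.card_product, Finset.card_univ, Fintype.card_fin, hfil,
        Finset.card_powersetCard, Finset.card_univ, Fintype.card_fin]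
    rw [this]
    have hch : Nat.choose K 10 ≤ K ^ 10 := Nat.choose_le_pow K 10
    have : (T * Nat.choose K 10 : ℕ) ≤ (T * K ^ 10 : ℕ) := Nat.mul_le_mul_left T hch
    calc ((T * Nat.choose K 10 : ℕ) : ℝ) ≤ ((T * K ^ 10 : ℕ) : ℝ) := by exact_mod_cast this
      _ = (T : ℝ) * (K : ℝ) ^ 10 := by push_cast; ring
  have hbad : ∑ ω ∈ Finset.univ.filter
      (fun ω : Fin K × (Fin T → Bool) × (Fin T → Fin K → Fin K → Bool) => ¬ ∀ t, IndepNumLE (ω.2.2 t) 9), graphDensity K T ε ω ≤ ε / 8 := by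
    calc ∑ ω ∈ Finset.univ.filter
          (fun ω : Fin K × (Fin T → Bool) × (Fin T → Fin K → Fin K → Bool) => ¬ ∀ t, IndepNumLE (ω.2.2 t) 9), graphDensity K T ε ω
        ≤ ∑ q ∈ I, ∑ ω ∈ C q, graphDensity K T ε ω :=
          sum_le_sum_of_cover I C _ _ hnn hcover
      _ ≤ ∑ _q ∈ I, (4 * ε) ^ 90 := Finset.sum_le_sum hcylq
      _ = (I.card : ℝ) * (4 * ε) ^ 90 := by rw [Finset.sum_const, nsmul_eq_mul]
      _ ≤ ((T : ℝ) * (K : ℝ) ^ 10) * (4 * ε) ^ 90 :=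
          mul_le_mul_of_nonneg_right hIcard (by positivity)
      _ ≤ ε / 8 := arith K T hK hT hε
  have hsplit := Finset.sum_filter_add_sum_filter_not Finset.univ
    (fun ω : Fin K × (Fin T → Bool) × (Fin T → Fin K → Fin K → Bool) => ∀ t, IndepNumLE (ω.2.2 t) 9) (graphDensity K T ε)
  linarith
end

section
/- Consider the uniform-sampling elimination process on a nonempty subset U of a K-element vertex set V, driven by a sequence G_1, G_2, … of directed graphs on V, each containing all self-loops. If K ≥ 2 and every graph G_r has independence number at most α, then the expected number of steps until the process empties satisfies E[τ] ≤ 10·α·log K. -/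
open scoped BigOperators ENNReal NNReal

/-- One step of the uniform-sampling elimination process with feedback graph `G`:
from a nonempty current set `U`, a vertex `u` is drawn uniformly at random from `U`
and the out-neighborhood of `u` in `G` is removed from `U`; the empty set is absorbing. -/
noncomputable def elimStep {K : ℕ} (G : Fin K → Fin K → Bool) (U : Finset (Fin K)) :
    PMF (Finset (Fin K)) :=
  if h : U.Nonempty then
    (PMF.uniformOfFinset U h).map (fun u => U.filter (fun v => G u v = false))
  else PMF.pure ∅

/-- `elimProc G U r` is the law of `U_{r+1}` in the uniform-sampling elimination process
started from `U₁ = U` and driven by the graphs `G 1, G 2, …` (step `r`, from `U_r` to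
`U_{r+1}`, uses the graph `G r`). -/
noncomputable def elimProc {K : ℕ} (G : ℕ → Fin K → Fin K → Bool) (U : Finset (Fin K)) :
    ℕ → PMF (Finset (Fin K))
  | 0 => PMF.pure U
  | r + 1 => (elimProc G U r).bind (elimStep (G (r + 1)))


private lemma caroWei {K : ℕ} (A : Fin K → Fin K → Bool)
    (hsym : ∀ u v, A u v = A v u) (hrefl : ∀ v, A v v = true) :
    ∀ (n : ℕ) (S : Finset (Fin K)), S.card ≤ n →
      ∀ (α : ℕ), (∀ I ⊆ S, (∀ u ∈ I, ∀ v ∈ I, u ≠ v → A u v = false) → I.card ≤ α) →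
      ∑ v ∈ S, ((S.filter (fun u => A v u)).card : ℝ)⁻¹ ≤ α := by
  intro n
  induction n with
  | zero =>
    intro S hS α _
    simp [Finset.card_eq_zero.mp (Nat.le_zero.mp hS)]
  | succ n ih =>
    intro S hS α hind
    rcases S.eq_empty_or_nonempty with rfl | hne
    · simp
    obtain ⟨v, hv, hmin⟩ := S.exists_min_image (fun v => (S.filter (fun u => A v u)).card) hne
    have hα1 : 1 ≤ α := by
      have := hind {v} (by simpa using hv) (by intro u hu w hw hne'; simp at hu hw; subst hu; subst hw; exact absurd rfl hne')
      simpa using this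
    set dS : Fin K → ℕ := fun w => (S.filter (fun u => A w u)).card with hdS
    have hdvpos : 0 < dS v := Finset.card_pos.mpr ⟨v, Finset.mem_filter.mpr ⟨hv, hrefl v⟩⟩
    set T : Finset (Fin K) := S.filter (fun u => ¬ (A v u = true)) with hT
    have hTS : T ⊆ S := Finset.filter_subset _ _
    have hvT : v ∉ T := by simp [hT, hrefl v]
    have hTcard : T.card ≤ n := by
      have h1 : T ⊆ S.erase v := fun x hx =>
        Finset.mem_erase.mpr ⟨fun h => hvT (h ▸ hx), hTS hx⟩
      have := Finset.card_le_card h1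
      have h2 := Finset.card_erase_of_mem hv
      omega
    -- independence hypothesis on T with α - 1
    have hindT : ∀ I ⊆ T, (∀ u ∈ I, ∀ w ∈ I, u ≠ w → A u w = false) → I.card ≤ α - 1 := by
      intro I hIT hI
      have hvI : v ∉ I := fun h => hvT (hIT h)
      have hins : insert v I ⊆ S := by
        intro x hx
        rcases Finset.mem_insert.mp hx with rfl | hx
        · exact hv
        · exact hTS (hIT hx)
      have hvfalse : ∀ u ∈ I, A v u = false := by
        intro u hu
        have := (Finset.mem_filter.mp (hIT hu)).2
        simpa using this
      have hinsInd : ∀ u ∈ insert v I, ∀ w ∈ insert v I, u ≠ w → A u w = false := by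
        intro u hu w hw hne'
        rcases Finset.mem_insert.mp hu with hu' | hu'
        · rcases Finset.mem_insert.mp hw with hw' | hw'
          · exact absurd (hu'.trans hw'.symm) hne'
          · rw [hu']; exact hvfalse w hw'
        · rcases Finset.mem_insert.mp hw with hw' | hw'
          · rw [hw', hsym]; exact hvfalse u hu'
          · exact hI u hu' w hw' hne'
      have := hind _ hins hinsInd
      rw [Finset.card_insert_of_notMem hvI] at this
      omega
    have hTsum := ih T hTcard (α - 1) hindT
    -- split sum over S into T and its complement
    have hsplit : ∑ w ∈ S, (dS w : ℝ)⁻¹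
        = ∑ w ∈ S.filter (fun u => A v u), (dS w : ℝ)⁻¹ + ∑ w ∈ T, (dS w : ℝ)⁻¹ := by
      rw [hT]
      exact (Finset.sum_filter_add_sum_filter_not S (fun u => A v u = true) _).symm
    have hpart1 : ∑ w ∈ S.filter (fun u => A v u), (dS w : ℝ)⁻¹ ≤ 1 := by
      have hbound : ∀ w ∈ S.filter (fun u => A v u), (dS w : ℝ)⁻¹ ≤ (dS v : ℝ)⁻¹ := by
        intro w hw
        have hwS : w ∈ S := (Finset.mem_filter.mp hw).1
        have := hmin w hwS
        exact inv_anti₀ (by exact_mod_cast hdvpos) (by exact_mod_cast this)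
      calc ∑ w ∈ S.filter (fun u => A v u), (dS w : ℝ)⁻¹
          ≤ ∑ _w ∈ S.filter (fun u => A v u), (dS v : ℝ)⁻¹ := Finset.sum_le_sum hbound
        _ = (dS v : ℝ) * (dS v : ℝ)⁻¹ := by rw [Finset.sum_const, nsmul_eq_mul, hdS]
        _ ≤ 1 := by
            rw [mul_inv_cancel₀]
            exact_mod_cast hdvpos.ne'
    have hpart2 : ∑ w ∈ T, (dS w : ℝ)⁻¹ ≤ (α : ℝ) - 1 := by
      have hterm : ∀ w ∈ T, (dS w : ℝ)⁻¹ ≤ ((T.filter (fun u => A w u)).card : ℝ)⁻¹ := by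
        intro w hw
        have hpos : 0 < (T.filter (fun u => A w u)).card :=
          Finset.card_pos.mpr ⟨w, Finset.mem_filter.mpr ⟨hw, hrefl w⟩⟩
        have hle : (T.filter (fun u => A w u)).card ≤ dS w :=
          Finset.card_le_card (Finset.filter_subset_filter _ hTS)
        exact inv_anti₀ (by exact_mod_cast hpos) (by exact_mod_cast hle)
      have h1 : ∑ w ∈ T, (dS w : ℝ)⁻¹ ≤ ∑ w ∈ T, ((T.filter (fun u => A w u)).card : ℝ)⁻¹ :=
        Finset.sum_le_sum hterm
      have h2 : ((α - 1 : ℕ) : ℝ) = (α : ℝ) - 1 := by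
        have : (1:ℕ) ≤ α := hα1
        push_cast [Nat.cast_sub this]
        ring
      linarith [hTsum, h2 ▸ hTsum]
    rw [hsplit]
    linarith

private lemma caroWei' {K : ℕ} (A : Fin K → Fin K → Bool)
    (hsym : ∀ u v, A u v = A v u) (hrefl : ∀ v, A v v = true)
    (α : ℕ) (hind : ∀ I : Finset (Fin K), (∀ u ∈ I, ∀ v ∈ I, u ≠ v → A u v = false) → I.card ≤ α)
    (S : Finset (Fin K)) :
    ∑ v ∈ S, ((S.filter (fun u => A v u)).card : ℝ)⁻¹ ≤ α :=
  caroWei A hsym hrefl S.card S le_rfl α (fun I _ hI => hind I hI)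

private lemma degSum {K α : ℕ} (G : Fin K → Fin K → Bool)
    (hself : ∀ v, G v v = true) (hind : IndepNumLE G α) (S : Finset (Fin K)) :
    (S.card : ℝ)^2 ≤ 2 * (α : ℝ) * ∑ u ∈ S, ((S.filter (fun v => G u v = true)).card : ℝ) := by
  set A : Fin K → Fin K → Bool := fun u v => G u v || G v u with hA
  have hsym : ∀ u v, A u v = A v u := fun u v => Bool.or_comm _ _
  have hrefl : ∀ v, A v v = true := fun v => by simp [hA, hself v]
  have hindA : ∀ I : Finset (Fin K), (∀ u ∈ I, ∀ v ∈ I, u ≠ v → A u v = false) → I.card ≤ α := by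
    intro I hI
    refine hind I (fun u hu v hv hne => ?_)
    have := hI u hu v hv hne
    simp only [hA, Bool.or_eq_false_iff] at this
    exact this.1
  have hcw := caroWei' A hsym hrefl α hindA S
  set dA : Fin K → ℕ := fun v => (S.filter (fun u => A v u)).card with hdA
  have hdpos : ∀ v ∈ S, 0 < dA v := fun v hv =>
    Finset.card_pos.mpr ⟨v, Finset.mem_filter.mpr ⟨hv, hrefl v⟩⟩
  -- Cauchy-Schwarz
  have cs := Finset.sum_mul_sq_le_sq_mul_sq S (fun v => Real.sqrt ((dA v : ℝ))⁻¹)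
      (fun v => Real.sqrt (dA v))
  have h1 : ∀ v ∈ S, Real.sqrt ((dA v : ℝ))⁻¹ * Real.sqrt (dA v) = 1 := by
    intro v hv
    rw [← Real.sqrt_mul (by positivity), inv_mul_cancel₀ (by exact_mod_cast (hdpos v hv).ne')]
    exact Real.sqrt_one
  have h2 : ∀ v : Fin K, Real.sqrt ((dA v : ℝ))⁻¹ ^ 2 = ((dA v : ℝ))⁻¹ :=
    fun v => Real.sq_sqrt (by positivity)
  have h3 : ∀ v : Fin K, Real.sqrt ((dA v : ℝ)) ^ 2 = (dA v : ℝ) :=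
    fun v => Real.sq_sqrt (by positivity)
  rw [Finset.sum_congr rfl h1, Finset.sum_congr rfl (fun v _ => h2 v),
    Finset.sum_congr rfl (fun v _ => h3 v)] at cs
  simp only [Finset.sum_const, nsmul_eq_mul, mul_one, one_pow] at cs
  -- degree double counting
  have hdeg : ∑ v ∈ S, (dA v : ℝ) ≤ 2 * ∑ u ∈ S, ((S.filter (fun v => G u v = true)).card : ℝ) := by
    have hsub : ∀ v, dA v ≤ (S.filter (fun u => G v u = true)).card
        + (S.filter (fun u => G u v = true)).card := by
      intro v
      have : S.filter (fun u => A v u = true)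
          ⊆ S.filter (fun u => G v u = true) ∪ S.filter (fun u => G u v = true) := by
        intro x hx
        rcases Finset.mem_filter.mp hx with ⟨hxS, hAx⟩
        simp only [hA, Bool.or_eq_true] at hAx
        rcases hAx with h | h
        · exact Finset.mem_union_left _ (Finset.mem_filter.mpr ⟨hxS, h⟩)
        · exact Finset.mem_union_right _ (Finset.mem_filter.mpr ⟨hxS, h⟩)
      exact le_trans (Finset.card_le_card this) (Finset.card_union_le _ _)
    have hswap : ∑ v ∈ S, ((S.filter (fun u => G u v = true)).card : ℝ)
        = ∑ u ∈ S, ((S.filter (fun v => G u v = true)).card : ℝ) := by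
      simp only [Finset.card_filter]
      push_cast
      rw [Finset.sum_comm]
    calc ∑ v ∈ S, (dA v : ℝ)
        ≤ ∑ v ∈ S, (((S.filter (fun u => G v u = true)).card : ℝ)
            + ((S.filter (fun u => G u v = true)).card : ℝ)) := by
          refine Finset.sum_le_sum (fun v _ => ?_)
          exact_mod_cast hsub v
      _ = ∑ v ∈ S, ((S.filter (fun u => G v u = true)).card : ℝ)
            + ∑ v ∈ S, ((S.filter (fun u => G u v = true)).card : ℝ) := Finset.sum_add_distrib
      _ = 2 * ∑ u ∈ S, ((S.filter (fun v => G u v = true)).card : ℝ) := by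
          rw [hswap]; ring
  have hdsum : (0:ℝ) ≤ ∑ v ∈ S, (dA v : ℝ) := Finset.sum_nonneg (fun v _ => by positivity)
  have hα0 : (0:ℝ) ≤ (α : ℝ) := by positivity
  calc (S.card : ℝ)^2 ≤ (∑ v ∈ S, ((dA v:ℝ))⁻¹) * ∑ v ∈ S, (dA v : ℝ) := cs
    _ ≤ (α : ℝ) * ∑ v ∈ S, (dA v : ℝ) := mul_le_mul_of_nonneg_right hcw hdsum
    _ ≤ (α : ℝ) * (2 * ∑ u ∈ S, ((S.filter (fun v => G u v = true)).card : ℝ)) :=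
        mul_le_mul_of_nonneg_left hdeg hα0
    _ = 2 * (α : ℝ) * ∑ u ∈ S, ((S.filter (fun v => G u v = true)).card : ℝ) := by ring
private lemma stepE_le {K α : ℕ} (G' : Fin K → Fin K → Bool)
    (hdeg : ∀ S : Finset (Fin K),
      (S.card : ℝ)^2 ≤ 2 * (α : ℝ) * ∑ u ∈ S, ((S.filter (fun v => G' u v = true)).card : ℝ))
    (hα : 1 ≤ α) (S : Finset (Fin K)) :
    ∑ S' : Finset (Fin K), (elimStep G' S) S' * S'.card
      ≤ ENNReal.ofReal (1 - 1/(2*(α:ℝ))) * S.card := by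
  rcases S.eq_empty_or_nonempty with rfl | hne
  · simp [elimStep, PMF.pure_apply]
  · rw [elimStep, dif_pos hne]
    set f : Fin K → Finset (Fin K) := fun u => S.filter (fun v => G' u v = false) with hf
    set p := PMF.uniformOfFinset S hne with hp
    have hLHS : ∑ S' : Finset (Fin K), (p.map f) S' * S'.card
        = ∑ u : Fin K, p u * (f u).card := by
      simp only [PMF.map_apply, tsum_fintype, Finset.sum_mul, ite_mul, zero_mul]
      rw [Finset.sum_comm]
      refine Finset.sum_congr rfl (fun u _ => ?_)
      simp
    rw [hLHS]
    set N : ℕ := ∑ u ∈ S, (f u).card with hN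
    have hsum2 : ∑ u : Fin K, p u * (f u).card = ((S.card : ℝ≥0∞))⁻¹ * N := by
      simp only [hp, PMF.uniformOfFinset_apply, ite_mul, zero_mul]
      rw [Finset.sum_ite_mem, Finset.univ_inter, hN, Nat.cast_sum, Finset.mul_sum]
    rw [hsum2]
    -- real-valued bound:  N ≤ (1 - 1/(2α)) * m²
    have hm : 0 < S.card := Finset.card_pos.mpr hne
    have hα' : (0:ℝ) < 2 * (α:ℝ) := by positivity
    have hNR : (N : ℝ) ≤ (1 - 1/(2*(α:ℝ))) * ((S.card : ℝ) * (S.card : ℝ)) := by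
      have hcompl : ∀ u, (f u).card = S.card - (S.filter (fun v => G' u v = true)).card := by
        intro u
        have h1 := Finset.card_filter_add_card_filter_not
          (s := S) (p := fun v => G' u v = true)
        have h2 : S.filter (fun v => ¬ (G' u v = true)) = S.filter (fun v => G' u v = false) := by
          refine Finset.filter_congr (fun v _ => ?_)
          simp
        rw [h2] at h1
        simp only [hf]
        omega
      have hle : ∀ u, (S.filter (fun v => G' u v = true)).card ≤ S.card :=
        fun u => Finset.card_le_card (Finset.filter_subset _ _)
      have hNval : (N:ℝ) = (S.card : ℝ) * S.card
          - ∑ u ∈ S, ((S.filter (fun v => G' u v = true)).card : ℝ) := by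
        have hterm : ∀ u ∈ S, (((f u).card : ℝ))
            = (S.card : ℝ) - ((S.filter (fun v => G' u v = true)).card : ℝ) := by
          intro u _
          rw [hcompl u, Nat.cast_sub (hle u)]
        rw [hN, Nat.cast_sum, Finset.sum_congr rfl hterm,
          Finset.sum_sub_distrib, Finset.sum_const, nsmul_eq_mul]
      have hd := hdeg S
      rw [hNval]
      have hdiv : (S.card : ℝ) * S.card / (2 * (α:ℝ))
          ≤ ∑ u ∈ S, ((S.filter (fun v => G' u v = true)).card : ℝ) := by
        rw [div_le_iff₀ hα']
        nlinarith [hd]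
      have : (1 - 1/(2*(α:ℝ))) * ((S.card : ℝ) * S.card)
          = (S.card : ℝ) * S.card - (S.card : ℝ) * S.card / (2 * (α:ℝ)) := by
        field_simp
      linarith
    -- transfer to ℝ≥0∞
    have hq0 : (0:ℝ) ≤ 1 - 1/(2*(α:ℝ)) := by
      have : 1/(2*(α:ℝ)) ≤ 1 := by
        rw [div_le_one hα']
        have : (1:ℝ) ≤ (α:ℝ) := by exact_mod_cast hα
        linarith
      linarith
    have hmne : (S.card : ℝ≥0∞) ≠ 0 := by
      simp [Finset.card_eq_zero, hne.ne_empty, hm.ne']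
    have hmnt : (S.card : ℝ≥0∞) ≠ ⊤ := ENNReal.natCast_ne_top _
    rw [ENNReal.inv_mul_le_iff hmne hmnt]
    have hrhs : (S.card : ℝ≥0∞) * (ENNReal.ofReal (1 - 1/(2*(α:ℝ))) * S.card)
        = ENNReal.ofReal ((1 - 1/(2*(α:ℝ))) * ((S.card:ℝ) * S.card)) := by
      have hcast : (S.card : ℝ≥0∞) = ENNReal.ofReal (S.card : ℝ) :=
        (ENNReal.ofReal_natCast _).symm
      rw [hcast, ← ENNReal.ofReal_mul hq0, ← ENNReal.ofReal_mul (by positivity)]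
      congr 1
      ring
    rw [hrhs, ← ENNReal.ofReal_natCast N]
    exact ENNReal.ofReal_le_ofReal hNR

private lemma procE_le {K α : ℕ} (G : ℕ → Fin K → Fin K → Bool)
    (hstep : ∀ r (S : Finset (Fin K)),
      ∑ S' : Finset (Fin K), (elimStep (G r) S) S' * S'.card
        ≤ ENNReal.ofReal (1 - 1/(2*(α:ℝ))) * S.card)
    (U : Finset (Fin K)) :
    ∀ r, ∑ S : Finset (Fin K), (elimProc G U r) S * S.card
      ≤ ENNReal.ofReal (1 - 1/(2*(α:ℝ))) ^ r * K := by
  intro r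
  induction r with
  | zero =>
    have h0 : elimProc G U 0 = PMF.pure U := rfl
    rw [h0, pow_zero, one_mul]
    simp only [PMF.pure_apply, ite_mul, one_mul, zero_mul]
    rw [Finset.sum_ite_eq' Finset.univ U (fun S => (S.card : ℝ≥0∞))]
    simp only [Finset.mem_univ, if_true]
    exact_mod_cast Nat.cast_le.mpr (le_trans (Finset.card_le_univ U) (by simp))
  | succ r ih =>
    have h1 : elimProc G U (r+1) = (elimProc G U r).bind (elimStep (G (r+1))) := rfl
    rw [h1]
    set p := elimProc G U r with hp
    set q := ENNReal.ofReal (1 - 1/(2*(α:ℝ))) with hq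
    have hbind : ∑ S' : Finset (Fin K), ((p.bind (elimStep (G (r+1)))) S') * S'.card
        = ∑ a : Finset (Fin K), p a * ∑ S' : Finset (Fin K),
            (elimStep (G (r+1)) a) S' * S'.card := by
      simp only [PMF.bind_apply, tsum_fintype, Finset.sum_mul]
      rw [Finset.sum_comm]
      refine Finset.sum_congr rfl (fun a _ => ?_)
      rw [Finset.mul_sum]
      exact Finset.sum_congr rfl (fun S' _ => mul_assoc _ _ _)
    rw [hbind]
    calc ∑ a : Finset (Fin K), p a * ∑ S' : Finset (Fin K), (elimStep (G (r+1)) a) S' * S'.card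
        ≤ ∑ a : Finset (Fin K), p a * (q * a.card) :=
          Finset.sum_le_sum (fun a _ => mul_le_mul_right (hstep (r+1) a) _)
      _ = q * ∑ a : Finset (Fin K), p a * a.card := by
          rw [Finset.mul_sum]
          refine Finset.sum_congr rfl (fun a _ => ?_)
          ring
      _ ≤ q * (q ^ r * K) := mul_le_mul_right ih _
      _ = q ^ (r+1) * K := by ring


/-- If `K ≥ 2` and every feedback graph contains all self-loops and has
independence number at most `α`, then the expected number of steps `τ` until the
uniform-sampling elimination process started from a nonempty `U ⊆ Fin K` empties
satisfies `E[τ] ≤ 10·α·log K`.  Here `E[τ]` is expressed by the exact layer-cake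
identity `E[τ] = ∑_{r ≥ 0} P(τ > r) = ∑_{r ≥ 0} P(U_{r+1} ≠ ∅)` (once empty, the
process stays empty, so `τ > r` iff `U_{r+1} ≠ ∅`). -/
theorem stmt6 (K α : ℕ) (hK : 2 ≤ K)
    (G : ℕ → Fin K → Fin K → Bool)
    (hself : ∀ r v, G r v v = true)
    (hind : ∀ r, IndepNumLE (G r) α)
    (U : Finset (Fin K)) (hU : U.Nonempty) :
    (∑' r : ℕ, ∑ S ∈ Finset.univ.filter (fun S : Finset (Fin K) => S.Nonempty),
        ((elimProc G U r) S).toReal) ≤ 10 * α * Real.log K := by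
  classical
  -- α ≥ 1
  have hα : 1 ≤ α := by
    have hv : (0:ℕ) < K := by omega
    have := hind 0 {⟨0, hv⟩} (by
      intro u hu w hw hne
      simp only [Finset.mem_singleton] at hu hw
      exact absurd (hu.trans hw.symm) hne)
    simpa using this
  have hαR : (1:ℝ) ≤ (α:ℝ) := by exact_mod_cast hα
  set q : ℝ := 1 - 1/(2*(α:ℝ)) with hqdef
  have hα' : (0:ℝ) < 2 * (α:ℝ) := by positivity
  have hq0 : 0 ≤ q := by
    have : 1/(2*(α:ℝ)) ≤ 1 := by rw [div_le_one hα']; linarith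
    simp only [hqdef]; linarith
  have hq1 : q < 1 := by
    have : 0 < 1/(2*(α:ℝ)) := by positivity
    simp only [hqdef]; linarith
  -- step bound
  have hstep : ∀ r (S : Finset (Fin K)),
      ∑ S' : Finset (Fin K), (elimStep (G r) S) S' * S'.card
        ≤ ENNReal.ofReal q * S.card := by
    intro r S
    exact stepE_le (G r) (fun S' => degSum (G r) (hself r) (hind r) S') hα S
  have hproc := procE_le G hstep U
  -- probability of being nonempty at time r
  set PE : ℕ → ℝ≥0∞ := fun r =>
    ∑ S ∈ Finset.univ.filter (fun S : Finset (Fin K) => S.Nonempty), (elimProc G U r) S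
    with hPEdef
  have hPEne : ∀ r, PE r ≠ ⊤ := by
    intro r
    refine (lt_of_le_of_lt (Finset.sum_le_sum_of_subset (Finset.filter_subset _ _)) ?_).ne
    rw [← tsum_fintype (L := SummationFilter.unconditional _)]
    rw [(elimProc G U r).tsum_coe]
    exact ENNReal.one_lt_top
  have hPE1 : ∀ r, PE r ≤ 1 := by
    intro r
    refine le_trans (Finset.sum_le_sum_of_subset (Finset.filter_subset _ _)) ?_
    rw [← tsum_fintype (L := SummationFilter.unconditional _), (elimProc G U r).tsum_coe]
  have hPEq : ∀ r, PE r ≤ ENNReal.ofReal q ^ r * K := by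
    intro r
    refine le_trans ?_ (hproc r)
    calc PE r ≤ ∑ S ∈ Finset.univ.filter (fun S : Finset (Fin K) => S.Nonempty),
          (elimProc G U r) S * S.card := by
          refine Finset.sum_le_sum (fun S hS => ?_)
          have hSne : S.Nonempty := (Finset.mem_filter.mp hS).2
          have h1 : (1:ℝ≥0∞) ≤ S.card := by
            exact_mod_cast Nat.one_le_cast.mpr (Finset.card_pos.mpr hSne)
          calc (elimProc G U r) S = (elimProc G U r) S * 1 := (mul_one _).symm
            _ ≤ (elimProc G U r) S * S.card := mul_le_mul_right h1 _
      _ ≤ ∑ S : Finset (Fin K), (elimProc G U r) S * S.card :=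
          Finset.sum_le_sum_of_subset (Finset.filter_subset _ _)
  -- real-valued summand
  set t : ℕ → ℝ := fun r =>
    ∑ S ∈ Finset.univ.filter (fun S : Finset (Fin K) => S.Nonempty),
      ((elimProc G U r) S).toReal with htdef
  have htPE : ∀ r, t r = (PE r).toReal := by
    intro r
    rw [hPEdef]
    exact (ENNReal.toReal_sum (fun S _ => PMF.apply_ne_top _ _)).symm
  set g : ℕ → ℝ := fun r => min 1 (q ^ r * K) with hgdef
  have ht_nonneg : ∀ r, 0 ≤ t r := fun r => by
    rw [htPE]; exact ENNReal.toReal_nonneg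
  have ht_le : ∀ r, t r ≤ g r := by
    intro r
    rw [htPE]
    refine le_min ?_ ?_
    · have := ENNReal.toReal_mono ENNReal.one_ne_top (hPE1 r)
      simpa using this
    · have hne : ENNReal.ofReal q ^ r * (K:ℝ≥0∞) ≠ ⊤ := by
        exact ENNReal.mul_ne_top (ENNReal.pow_ne_top ENNReal.ofReal_ne_top)
          (ENNReal.natCast_ne_top K)
      have := ENNReal.toReal_mono hne (hPEq r)
      rwa [ENNReal.toReal_mul, ENNReal.toReal_pow, ENNReal.toReal_ofReal hq0,
        ENNReal.toReal_natCast] at this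
  have hg_nonneg : ∀ r, 0 ≤ g r := fun r =>
    le_min zero_le_one (by positivity)
  have hh_sum : Summable (fun r : ℕ => q ^ r * (K:ℝ)) :=
    (summable_geometric_of_lt_one hq0 hq1).mul_right _
  have hg_sum : Summable g :=
    Summable.of_nonneg_of_le hg_nonneg (fun r => min_le_right _ _) hh_sum
  have ht_sum : Summable t :=
    Summable.of_nonneg_of_le ht_nonneg ht_le hg_sum
  have h1 : ∑' r, t r ≤ ∑' r, g r := Summable.tsum_le_tsum ht_le ht_sum hg_sum
  -- split the sum of g at r0
  set r0 : ℕ := ⌈2*(α:ℝ) * Real.log K⌉₊ with hr0def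
  have hKpos : (0:ℝ) < K := by positivity
  have hlogK0 : 0 ≤ Real.log K := Real.log_nonneg (by exact_mod_cast hK.trans' (by norm_num))
  -- q^r0 * K ≤ 1
  have hqr0 : q ^ r0 * K ≤ 1 := by
    have hexp : q ≤ Real.exp (-(1/(2*(α:ℝ)))) := by
      have := Real.add_one_le_exp (-(1/(2*(α:ℝ))))
      simp only [hqdef]; linarith
    have h2 : q ^ r0 ≤ Real.exp (-(1/(2*(α:ℝ)))) ^ r0 := pow_le_pow_left₀ hq0 hexp r0
    have h3 : Real.exp (-(1/(2*(α:ℝ)))) ^ r0 = Real.exp ((r0:ℝ) * (-(1/(2*(α:ℝ))))) :=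
      (Real.exp_nat_mul _ r0).symm
    have h4 : Real.exp ((r0:ℝ) * (-(1/(2*(α:ℝ))))) ≤ Real.exp (-(Real.log K)) := by
      refine Real.exp_le_exp.mpr ?_
      have hceil : 2*(α:ℝ) * Real.log K ≤ r0 := Nat.le_ceil _
      have hdiv : Real.log K ≤ (r0:ℝ) / (2*(α:ℝ)) := by
        rw [le_div_iff₀ hα']
        linarith [hceil]
      have heq : (r0:ℝ) * (-(1/(2*(α:ℝ)))) = -((r0:ℝ) / (2*(α:ℝ))) := by ring
      rw [heq]
      linarith
    have h5 : Real.exp (-(Real.log K)) = (K:ℝ)⁻¹ := by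
      rw [Real.exp_neg, Real.exp_log hKpos]
    have h6 : q ^ r0 ≤ (K:ℝ)⁻¹ := by
      rw [← h5]; exact h2.trans (h3 ▸ h4)
    calc q ^ r0 * K ≤ (K:ℝ)⁻¹ * K := by
          exact mul_le_mul_of_nonneg_right h6 hKpos.le
      _ = 1 := inv_mul_cancel₀ hKpos.ne'
  have hgtail : ∑' i, g (i + r0) ≤ 2*(α:ℝ) := by
    have htail_sum : Summable (fun i => g (i + r0)) :=
      (summable_nat_add_iff r0).mpr hg_sum
    have hgeo_sum : Summable (fun i : ℕ => (q ^ r0 * K) * q ^ i) :=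
      (summable_geometric_of_lt_one hq0 hq1).mul_left _
    have hle : ∀ i, g (i + r0) ≤ (q ^ r0 * K) * q ^ i := by
      intro i
      refine le_trans (min_le_right _ _) ?_
      rw [pow_add]
      ring_nf
      exact le_refl _
    calc ∑' i, g (i + r0) ≤ ∑' i, (q ^ r0 * K) * q ^ i :=
          Summable.tsum_le_tsum hle htail_sum hgeo_sum
      _ = (q ^ r0 * K) * (1 - q)⁻¹ := by
          rw [tsum_mul_left, tsum_geometric_of_lt_one hq0 hq1]
      _ ≤ 1 * (1 - q)⁻¹ := by
          exact mul_le_mul_of_nonneg_right hqr0 (inv_nonneg.mpr (by linarith))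
      _ = 2*(α:ℝ) := by
          rw [one_mul, hqdef]
          have : (1:ℝ) - (1 - 1/(2*(α:ℝ))) = 1/(2*(α:ℝ)) := by ring
          rw [this, one_div, inv_inv]
  have hghead : ∑ i ∈ Finset.range r0, g i ≤ r0 := by
    calc ∑ i ∈ Finset.range r0, g i ≤ ∑ _i ∈ Finset.range r0, (1:ℝ) :=
          Finset.sum_le_sum (fun i _ => min_le_left _ _)
      _ = r0 := by simp
  have hgsum : ∑' r, g r ≤ r0 + 2*(α:ℝ) := by
    rw [← Summable.sum_add_tsum_nat_add r0 hg_sum]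
    exact add_le_add hghead hgtail
  -- final arithmetic
  have hr0 : (r0:ℝ) < 2*(α:ℝ) * Real.log K + 1 :=
    Nat.ceil_lt_add_one (by positivity)
  have hlog2 : (1:ℝ)/2 ≤ Real.log K := by
    have h2 : Real.log 2 ≤ Real.log K :=
      Real.log_le_log (by norm_num) (by exact_mod_cast hK)
    have := Real.log_two_gt_d9
    linarith
  calc (∑' r, t r) ≤ ∑' r, g r := h1
    _ ≤ r0 + 2*(α:ℝ) := hgsum
    _ ≤ 10 * α * Real.log K := by
        have h8 : (0:ℝ) ≤ 8*(α:ℝ) := by positivity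
        nlinarith [mul_le_mul_of_nonneg_left hlog2 h8]
end
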